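/- arXiv:1008.5338 — 2 statements merged into one kernel-verified Lean document; each statement's English description precedes it below -/
import Mathlib

section
/- Let (X,T) be a topological dynamical system, f ∈ C(X,ℝ), and let (K_n)_{n≥1} be a sequence of non-empty closed subsets of X. Then lim_{δ→0} limsup_{n→∞} (1/n) log P_n(T,f,δ,K_n) = sup_{𝒰} limsup_{n→∞} (1/n) log P_n(T,f,𝒰,K_n), where the supremum is over all finite open covers 𝒰 of X. -/
open Filter Set Topology MeasureTheory

noncomputable section

variable {X : Type*}

/-- Birkhoff sum `f_n(x) = ∑_{j<n} f(T^j x)`. -/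
def birk (T : X → X) (f : X → ℝ) (n : ℕ) (x : X) : ℝ :=
  ∑ j ∈ Finset.range n, f (T^[j] x)

/-- `P_n(T,f,δ,K)`: supremum of `∑_{x∈E} exp f_n(x)` over `(n,δ)`-separated
subsets `E ⊆ K`. -/
def sepPn [MetricSpace X] (T : X → X) (f : X → ℝ) (n : ℕ) (δ : ℝ) (K : Set X) : ℝ :=
  sSup { r : ℝ | ∃ E : Finset X, ↑E ⊆ K ∧
    (∀ x ∈ E, ∀ y ∈ E, x ≠ y → ∃ i < n, δ < dist (T^[i] x) (T^[i] y)) ∧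
    r = ∑ x ∈ E, Real.exp (birk T f n x) }

/-- The topological pressure of `T` for the subset `K`:
`P(T,f,K) = lim_{δ→0} limsup_n (1/n) log P_n(T,f,δ,K)`; since the expression is
nonincreasing in `δ`, the limit is the supremum over `δ > 0`. -/
def pres [MetricSpace X] (T : X → X) (f : X → ℝ) (K : Set X) : EReal :=
  ⨆ (δ : ℝ) (_ : 0 < δ), atTop.limsup fun n : ℕ =>
    ((Real.log (sepPn T f n δ K) / n : ℝ) : EReal)

/-- The `ε`-stable set `W^s_ε(x,T)`. -/
def epsStable [MetricSpace X] (T : X → X) (ε : ℝ) (x : X) : Set X :=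
  { y | ∀ n : ℕ, dist (T^[n] x) (T^[n] y) ≤ ε }

/-- The topological pressure of the preimages of the `ε`-stable set of `x`:
`P_s(T,f,x,ε) = lim_{δ→0} limsup_n (1/n) log P_n(T,f,δ,T^{-n}W^s_ε(x,T))`. -/
def Ps [MetricSpace X] (T : X → X) (f : X → ℝ) (x : X) (ε : ℝ) : EReal :=
  ⨆ (δ : ℝ) (_ : 0 < δ), atTop.limsup fun n : ℕ =>
    ((Real.log (sepPn T f n δ ((T^[n]) ⁻¹' epsStable T ε x)) / n : ℝ) : EReal)

/-- A finite open cover of `X`. -/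
def IsOpenCover [TopologicalSpace X] (𝒰 : Finset (Set X)) : Prop :=
  (∀ U ∈ 𝒰, IsOpen U) ∧ ⋃₀ (𝒰 : Set (Set X)) = univ

/-- A finite Borel cover of `X`. -/
def IsBorelCover [MeasurableSpace X] (𝒱 : Finset (Set X)) : Prop :=
  (∀ V ∈ 𝒱, MeasurableSet V) ∧ ⋃₀ (𝒱 : Set (Set X)) = univ

/-- `𝒱` refines the iterated cover `𝒰_0^{n-1} = ⋁_{i<n} T^{-i}𝒰`. -/
def RefinesIter (T : X → X) (𝒰 : Finset (Set X)) (n : ℕ) (𝒱 : Finset (Set X)) : Prop :=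
  ∀ V ∈ 𝒱, ∃ g : Fin n → Set X, (∀ i, g i ∈ 𝒰) ∧ V ⊆ ⋂ i : Fin n, (T^[(i : ℕ)]) ⁻¹' g i

/-- `P_n(T,f,𝒰,K)`: infimum over finite Borel covers `𝒱` refining `𝒰_0^{n-1}` of
`∑_{V∈𝒱} sup_{x ∈ V∩K} exp f_n(x)` (an empty summand contributes `0`, which is
`Real.sSup ∅`). -/
def covPn [MeasurableSpace X] (T : X → X) (f : X → ℝ) (𝒰 : Finset (Set X)) (n : ℕ)
    (K : Set X) : ℝ :=
  sInf { r : ℝ | ∃ 𝒱 : Finset (Set X), IsBorelCover 𝒱 ∧ RefinesIter T 𝒰 n 𝒱 ∧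
    r = ∑ V ∈ 𝒱, sSup ((fun x => Real.exp (birk T f n x)) '' (V ∩ K)) }

/-- A finite Borel partition of `X`. -/
def IsFinPartition [MeasurableSpace X] (α : Finset (Set X)) : Prop :=
  (∀ A ∈ α, MeasurableSet A) ∧ ⋃₀ (α : Set (Set X)) = univ ∧
    (α : Set (Set X)).Pairwise Disjoint

/-- `H_μ(⋁_{i<n} T^{-i}α)`, computed over all atoms `⋂_{i<n} T^{-i} A_i`. -/
def dynH [MeasurableSpace X] (μ : Measure X) (T : X → X) (α : Finset (Set X)) (n : ℕ) : ℝ :=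
  ∑ g : Fin n → α, Real.negMulLog ((μ (⋂ i : Fin n, (T^[(i : ℕ)]) ⁻¹' (g i : Set X))).toReal)

/-- `h_μ(T,α) = lim_n (1/n) H_μ(α_0^{n-1})`, which for an invariant measure equals
the infimum of `(1/n) H_μ(α_0^{n-1})` over `n ≥ 1`. -/
def entPart [MeasurableSpace X] (μ : Measure X) (T : X → X) (α : Finset (Set X)) : ℝ :=
  ⨅ n : ℕ, dynH μ T α (n + 1) / (n + 1 : ℝ)

/-- The measure-theoretic entropy `h_μ(T)`. -/
def mEnt [MeasurableSpace X] (μ : Measure X) (T : X → X) : EReal :=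
  ⨆ (α : Finset (Set X)) (_ : IsFinPartition α), ((entPart μ T α : ℝ) : EReal)

/-- The measure-theoretic pressure `P_μ(T,f) = h_μ(T) + ∫ f dμ`. -/
def mPres [MeasurableSpace X] (μ : Measure X) (T : X → X) (f : X → ℝ) : EReal :=
  mEnt μ T + ((∫ x, f x ∂μ : ℝ) : EReal)

/-- The stable set `W^s(x,T)`. -/
def stableSet [MetricSpace X] (T : X → X) (x : X) : Set X :=
  { y | Tendsto (fun n : ℕ => dist (T^[n] x) (T^[n] y)) atTop (𝓝 0) }

/-- A Cantor set: a nonempty compact perfect totally disconnected set. -/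
def IsCantorSet [TopologicalSpace X] (C : Set X) : Prop :=
  C.Nonempty ∧ IsCompact C ∧ Perfect C ∧ IsTotallyDisconnected C

/-- A weakly mixing set for `T`. -/
def IsWeaklyMixingSet [TopologicalSpace X] (T : X → X) (A : Set X) : Prop :=
  A.Nonempty ∧ IsClosed A ∧
  ∃ B : Set X, B ⊆ A ∧
    (∃ C : ℕ → Set X, (∀ n, IsCantorSet (C n)) ∧ B = ⋃ n, C n) ∧
    closure B = A ∧
    ∀ C : Set X, C ⊆ B → IsCantorSet C →
      ∀ g : C → X, Continuous g → (∀ c : C, g c ∈ A) →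
        ∃ φ : ℕ → ℕ, StrictMono φ ∧
          ∀ c : C, Tendsto (fun i => T^[φ i] (c : X)) atTop (𝓝 (g c))

-- ### auxiliary definitions

/-- The defining set of `sepPn`. -/
def sepSet [MetricSpace X] (T : X → X) (f : X → ℝ) (n : ℕ) (δ : ℝ) (K : Set X) : Set ℝ :=
  { r : ℝ | ∃ E : Finset X, ↑E ⊆ K ∧
    (∀ x ∈ E, ∀ y ∈ E, x ≠ y → ∃ i < n, δ < dist (T^[i] x) (T^[i] y)) ∧
    r = ∑ x ∈ E, Real.exp (birk T f n x) }

lemma sepPn_def [MetricSpace X] (T : X → X) (f : X → ℝ) (n : ℕ) (δ : ℝ) (K : Set X) :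
    sepPn T f n δ K = sSup (sepSet T f n δ K) := rfl

/-- The defining set of `covPn`. -/
def covSet [MeasurableSpace X] (T : X → X) (f : X → ℝ) (𝒰 : Finset (Set X)) (n : ℕ)
    (K : Set X) : Set ℝ :=
  { r : ℝ | ∃ 𝒱 : Finset (Set X), IsBorelCover 𝒱 ∧ RefinesIter T 𝒰 n 𝒱 ∧
    r = ∑ V ∈ 𝒱, sSup ((fun x => Real.exp (birk T f n x)) '' (V ∩ K)) }

lemma covPn_def [MeasurableSpace X] (T : X → X) (f : X → ℝ) (𝒰 : Finset (Set X)) (n : ℕ)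
    (K : Set X) : covPn T f 𝒰 n K = sInf (covSet T f 𝒰 n K) := rfl

-- ### basic bounds

lemma birk_abs_le {T : X → X} {f : X → ℝ} {M : ℝ} (hM : ∀ x, |f x| ≤ M) (n : ℕ) (x : X) :
    |birk T f n x| ≤ n * M := by
  calc |birk T f n x| ≤ ∑ j ∈ Finset.range n, |f (T^[j] x)| :=
        Finset.abs_sum_le_sum_abs _ _
    _ ≤ ∑ _j ∈ Finset.range n, M := Finset.sum_le_sum fun j _ => hM _
    _ = n * M := by simp [mul_comm]

lemma sep_card_bound [MetricSpace X] [CompactSpace X] {T : X → X} (hT : Continuous T)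
    (n : ℕ) {δ : ℝ} (hδ : 0 < δ) :
    ∃ N : ℕ, ∀ E : Finset X,
      (∀ x ∈ E, ∀ y ∈ E, x ≠ y → ∃ i < n, δ < dist (T^[i] x) (T^[i] y)) → E.card ≤ N := by
  classical
  set G : X → Set X := fun c => ⋂ i : Fin n, (T^[(i : ℕ)]) ⁻¹' Metric.ball (T^[(i : ℕ)] c) (δ/2)
    with hGdef
  have hGopen : ∀ c, IsOpen (G c) := fun c =>
    isOpen_iInter_of_finite fun i => Metric.isOpen_ball.preimage (hT.iterate _)
  have hGmem : ∀ c, c ∈ G c := fun c => Set.mem_iInter.2 fun i => by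
    simp [Metric.mem_ball, half_pos hδ]
  obtain ⟨t, ht⟩ := isCompact_univ.elim_finite_subcover G hGopen
    (fun x _ => Set.mem_iUnion.2 ⟨x, hGmem x⟩)
  have hchoice : ∀ x : X, ∃ c ∈ t, x ∈ G c := fun x => by
    have := ht (Set.mem_univ x)
    simpa using this
  choose c hct hcG using hchoice
  refine ⟨t.card, fun E hE => ?_⟩
  refine Finset.card_le_card_of_injOn c (fun x _ => hct x) ?_
  intro x hx y hy hxy
  by_contra hne
  obtain ⟨i, hi, hd⟩ := hE x hx y hy hne
  have h1 : dist (T^[i] x) (T^[i] (c x)) < δ/2 := by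
    have := Set.mem_iInter.1 (hcG x) ⟨i, hi⟩
    simpa [Metric.mem_ball] using this
  have h2 : dist (T^[i] y) (T^[i] (c y)) < δ/2 := by
    have := Set.mem_iInter.1 (hcG y) ⟨i, hi⟩
    simpa [Metric.mem_ball] using this
  rw [hxy] at h1
  have h3 := dist_triangle_right (T^[i] x) (T^[i] y) (T^[i] (c y))
  linarith

lemma bddAbove_sepSet [MetricSpace X] [CompactSpace X] {T : X → X} (hT : Continuous T)
    {f : X → ℝ} {M : ℝ} (hM : ∀ x, |f x| ≤ M) (n : ℕ) {δ : ℝ} (hδ : 0 < δ) (K : Set X) :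
    BddAbove (sepSet T f n δ K) := by
  obtain ⟨N, hN⟩ := sep_card_bound hT n hδ
  refine ⟨N * Real.exp (n * M), ?_⟩
  rintro r ⟨E, hEK, hsep, rfl⟩
  calc ∑ x ∈ E, Real.exp (birk T f n x) ≤ ∑ _x ∈ E, Real.exp (n * M) :=
        Finset.sum_le_sum fun x _ => Real.exp_le_exp.2 (abs_le.1 (birk_abs_le hM n x)).2
    _ = E.card * Real.exp (n * M) := by simp [mul_comm]
    _ ≤ N * Real.exp (n * M) := by
        have := hN E hsep
        have : (E.card : ℝ) ≤ N := by exact_mod_cast this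
        nlinarith [Real.exp_pos ((n : ℝ) * M)]

lemma le_sepPn [MetricSpace X] [CompactSpace X] {T : X → X} (hT : Continuous T)
    {f : X → ℝ} {M : ℝ} (hM : ∀ x, |f x| ≤ M) (n : ℕ) {δ : ℝ} (hδ : 0 < δ) {K : Set X}
    {E : Finset X} (hEK : ↑E ⊆ K)
    (hsep : ∀ x ∈ E, ∀ y ∈ E, x ≠ y → ∃ i < n, δ < dist (T^[i] x) (T^[i] y)) :
    ∑ x ∈ E, Real.exp (birk T f n x) ≤ sepPn T f n δ K :=
  le_csSup (bddAbove_sepSet hT hM n hδ K) ⟨E, hEK, hsep, rfl⟩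

lemma sepPn_pos [MetricSpace X] [CompactSpace X] {T : X → X} (hT : Continuous T)
    {f : X → ℝ} {M : ℝ} (hM : ∀ x, |f x| ≤ M) (n : ℕ) {δ : ℝ} (hδ : 0 < δ) {K : Set X}
    (hK : K.Nonempty) : 0 < sepPn T f n δ K := by
  obtain ⟨x₀, hx₀⟩ := hK
  have h := le_sepPn hT hM n hδ (E := {x₀}) (by simpa using hx₀) (by simp)
  simp only [Finset.sum_singleton] at h
  exact lt_of_lt_of_le (Real.exp_pos _) h

lemma sSup_im_nonneg [MetricSpace X] (T : X → X) (f : X → ℝ) (n : ℕ) (s : Set X) :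
    0 ≤ sSup ((fun x => Real.exp (birk T f n x)) '' s) := by
  refine Real.sSup_nonneg fun r hr => ?_
  obtain ⟨x, -, rfl⟩ := hr
  positivity

lemma bddAbove_im [MetricSpace X] {T : X → X} {f : X → ℝ} {M : ℝ} (hM : ∀ x, |f x| ≤ M)
    (n : ℕ) (s : Set X) :
    BddAbove ((fun x => Real.exp (birk T f n x)) '' s) := by
  refine ⟨Real.exp (n * M), ?_⟩
  rintro r ⟨x, -, rfl⟩
  exact Real.exp_le_exp.2 (abs_le.1 (birk_abs_le hM n x)).2

lemma covSet_elem_nonneg [MetricSpace X] [MeasurableSpace X] {T : X → X} {f : X → ℝ}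
    {𝒰 : Finset (Set X)} {n : ℕ} {K : Set X} {r : ℝ} (hr : r ∈ covSet T f 𝒰 n K) : 0 ≤ r := by
  obtain ⟨𝒱, -, -, rfl⟩ := hr
  exact Finset.sum_nonneg fun V _ => sSup_im_nonneg T f n _

lemma exists_cov_mem [MetricSpace X] [MeasurableSpace X] [BorelSpace X] {T : X → X}
    (hT : Continuous T) (f : X → ℝ) {𝒰 : Finset (Set X)} (h𝒰 : IsOpenCover 𝒰)
    (n : ℕ) (K : Set X) : (covSet T f 𝒰 n K).Nonempty := by
  classical
  set A : (Fin n → {U // U ∈ 𝒰}) → Set X :=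
    fun g => ⋂ i : Fin n, (T^[(i : ℕ)]) ⁻¹' (g i : Set X) with hA
  refine ⟨_, Finset.univ.image A, ⟨?_, ?_⟩, ?_, rfl⟩
  · intro V hV
    obtain ⟨g, -, rfl⟩ := Finset.mem_image.1 hV
    exact MeasurableSet.iInter fun i =>
      ((h𝒰.1 _ (g i).2).measurableSet).preimage (hT.iterate _).measurable
  · apply Set.eq_univ_of_univ_subset
    intro x _
    have hx : ∀ i : Fin n, ∃ U ∈ 𝒰, T^[(i : ℕ)] x ∈ U := fun i => by
      have h2 : T^[(i : ℕ)] x ∈ ⋃₀ (𝒰 : Set (Set X)) := h𝒰.2.symm ▸ Set.mem_univ _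
      simpa using h2
    choose U hU hxU using hx
    exact Set.mem_sUnion.2 ⟨A fun i => ⟨U i, hU i⟩,
      Finset.mem_coe.2 (Finset.mem_image_of_mem A (Finset.mem_univ _)),
      Set.mem_iInter.2 fun i => hxU i⟩
  · intro V hV
    obtain ⟨g, -, rfl⟩ := Finset.mem_image.1 hV
    exact ⟨fun i => g i, fun i => (g i).2, subset_rfl⟩

lemma covPn_nonneg [MetricSpace X] [MeasurableSpace X] (T : X → X) (f : X → ℝ)
    (𝒰 : Finset (Set X)) (n : ℕ) (K : Set X) : 0 ≤ covPn T f 𝒰 n K :=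
  Real.sInf_nonneg fun _ hr => covSet_elem_nonneg hr

lemma covPn_le_of_mem [MetricSpace X] [MeasurableSpace X] {T : X → X} {f : X → ℝ}
    {𝒰 : Finset (Set X)} {n : ℕ} {K : Set X} {r : ℝ} (hr : r ∈ covSet T f 𝒰 n K) :
    covPn T f 𝒰 n K ≤ r :=
  csInf_le ⟨0, fun _ h => covSet_elem_nonneg h⟩ hr

lemma covPn_pos [MetricSpace X] [CompactSpace X] [MeasurableSpace X] [BorelSpace X]
    {T : X → X} (hT : Continuous T) {f : X → ℝ} {M : ℝ} (hM : ∀ x, |f x| ≤ M)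
    {𝒰 : Finset (Set X)} (h𝒰 : IsOpenCover 𝒰) (n : ℕ) {K : Set X} (hK : K.Nonempty) :
    Real.exp (-(n * M)) ≤ covPn T f 𝒰 n K := by
  refine le_csInf (exists_cov_mem hT f h𝒰 n K) ?_
  rintro b ⟨𝒱, h𝒱, -, rfl⟩
  obtain ⟨x₀, hx₀⟩ := hK
  have hx' : x₀ ∈ ⋃₀ (𝒱 : Set (Set X)) := h𝒱.2.symm ▸ Set.mem_univ _
  obtain ⟨V, hV, hxV⟩ := Set.mem_sUnion.1 hx'
  have h1 : Real.exp (-(n * M)) ≤ sSup ((fun x => Real.exp (birk T f n x)) '' (V ∩ K)) := by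
    refine le_trans ?_ (le_csSup (bddAbove_im hM n _) ⟨x₀, ⟨hxV, hx₀⟩, rfl⟩)
    exact Real.exp_le_exp.2 ((abs_le.1 (birk_abs_le hM n x₀)).1)
  exact h1.trans (Finset.single_le_sum (fun W _ => sSup_im_nonneg T f n (W ∩ K))
    (Finset.mem_coe.1 hV))

lemma sum_image_le' {α β : Type*} [DecidableEq β] {s : Finset α} {f : α → β} {g : β → ℝ}
    (hg : ∀ b, 0 ≤ g b) : ∑ b ∈ s.image f, g b ≤ ∑ a ∈ s, g (f a) := by
  classical
  induction s using Finset.induction_on with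
  | empty => simp
  | insert _ _ ha ih =>
    rename_i a s'
    rw [Finset.image_insert, Finset.sum_insert ha]
    by_cases h : f a ∈ s'.image f
    · rw [Finset.insert_eq_self.2 h]
      exact le_add_of_nonneg_of_le (hg _) ih
    · rw [Finset.sum_insert h]
      exact add_le_add le_rfl ih

lemma ereal_le_of_forall_pos {A B : EReal} (h : ∀ η : ℝ, 0 < η → A ≤ (η : EReal) + B) :
    A ≤ B := by
  by_contra hlt
  push_neg at hlt
  rcases eq_or_ne B ⊥ with rfl | hB
  · have h1 := h 1 one_pos
    rw [EReal.add_bot] at h1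
    exact absurd (le_bot_iff.1 h1) hlt.ne'
  · obtain ⟨c, hc1, hc2⟩ := EReal.exists_between_coe_real hlt
    have hBtop : B ≠ ⊤ := (hc1.trans (EReal.coe_lt_top c)).ne
    lift B to ℝ using ⟨hBtop, hB⟩ with b
    have hcb : 0 < c - b := sub_pos.2 (EReal.coe_lt_coe_iff.1 hc1)
    have h2 := h (c - b) hcb
    rw [← EReal.coe_add, sub_add_cancel] at h2
    exact absurd (hc2.trans_le h2) (lt_irrefl _)

/-- The easy direction: covers by small balls dominate separated sums. -/
lemma sepPn_le_covPn_easy [MetricSpace X] [CompactSpace X] [MeasurableSpace X] [BorelSpace X]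
    [Nonempty X] (T : X ≃ₜ X) (f : C(X, ℝ)) {M : ℝ} (hM : ∀ x, |f x| ≤ M)
    {δ : ℝ} (hδ : 0 < δ) :
    ∃ 𝒰 : Finset (Set X), IsOpenCover 𝒰 ∧
      ∀ (n : ℕ) (K : Set X), sepPn ⇑T ⇑f n δ K ≤ covPn ⇑T ⇑f 𝒰 n K := by
  classical
  obtain ⟨s, -, hsfin, hscov⟩ := finite_cover_balls_of_compact (isCompact_univ : IsCompact (univ : Set X)) (half_pos hδ)
  set 𝒰 : Finset (Set X) := hsfin.toFinset.image fun z => Metric.ball z (δ/2) with h𝒰def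
  have h𝒰 : IsOpenCover 𝒰 := by
    constructor
    · intro U hU
      obtain ⟨z, -, rfl⟩ := Finset.mem_image.1 hU
      exact Metric.isOpen_ball
    · apply Set.eq_univ_of_univ_subset
      intro x _
      obtain ⟨z, hz, hxz⟩ := Set.mem_iUnion₂.1 (hscov (Set.mem_univ x))
      exact Set.mem_sUnion.2 ⟨Metric.ball z (δ/2),
        Finset.mem_coe.2 (Finset.mem_image_of_mem _ (hsfin.mem_toFinset.2 hz)), hxz⟩
  refine ⟨𝒰, h𝒰, fun n K => ?_⟩
  rw [sepPn_def, covPn_def]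
  refine Real.sSup_le ?_ (covPn_nonneg ⇑T ⇑f 𝒰 n K)
  rintro r ⟨E, hEK, hsep, rfl⟩
  refine le_csInf (exists_cov_mem (T.continuous) ⇑f h𝒰 n K) ?_
  rintro b ⟨𝒱, h𝒱, href, rfl⟩
  have hch : ∀ x : X, ∃ V ∈ 𝒱, x ∈ V := fun x => by
    have hx : x ∈ ⋃₀ (𝒱 : Set (Set X)) := h𝒱.2.symm ▸ Set.mem_univ _
    obtain ⟨V, hV, hxV⟩ := Set.mem_sUnion.1 hx
    exact ⟨V, Finset.mem_coe.1 hV, hxV⟩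
  choose V hVmem hxV using hch
  have hinj : ∀ x ∈ E, ∀ y ∈ E, V x = V y → x = y := by
    intro x hx y hy hVxy
    by_contra hne
    obtain ⟨i, hi, hd⟩ := hsep x hx y hy hne
    obtain ⟨g, hg𝒰, hsub⟩ := href (V x) (hVmem x)
    have hxi : T^[i] x ∈ g ⟨i, hi⟩ := Set.mem_iInter.1 (hsub (hxV x)) ⟨i, hi⟩
    have hyi : T^[i] y ∈ g ⟨i, hi⟩ := by
      have : y ∈ V x := hVxy ▸ hxV y
      exact Set.mem_iInter.1 (hsub this) ⟨i, hi⟩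
    obtain ⟨z, -, hz⟩ := Finset.mem_image.1 (hg𝒰 ⟨i, hi⟩)
    rw [← hz] at hxi hyi
    have h1 : dist (T^[i] x) z < δ/2 := Metric.mem_ball.1 hxi
    have h2 : dist (T^[i] y) z < δ/2 := Metric.mem_ball.1 hyi
    have h3 := dist_triangle_right (T^[i] x) (T^[i] y) z
    linarith
  calc ∑ x ∈ E, Real.exp (birk ⇑T ⇑f n x)
      ≤ ∑ x ∈ E, sSup ((fun x => Real.exp (birk ⇑T ⇑f n x)) '' (V x ∩ K)) := by
        refine Finset.sum_le_sum fun x hx => ?_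
        exact le_csSup (bddAbove_im hM n _) ⟨x, ⟨hxV x, hEK hx⟩, rfl⟩
    _ = ∑ W ∈ E.image V, sSup ((fun x => Real.exp (birk ⇑T ⇑f n x)) '' (W ∩ K)) :=
        (Finset.sum_image (g := V) (f := fun W => sSup ((fun x => Real.exp (birk ⇑T ⇑f n x)) '' (W ∩ K))) hinj).symm
    _ ≤ ∑ W ∈ 𝒱, sSup ((fun x => Real.exp (birk ⇑T ⇑f n x)) '' (W ∩ K)) := by
        refine Finset.sum_le_sum_of_subset_of_nonneg ?_ fun W _ _ => sSup_im_nonneg ⇑T ⇑f n _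
        intro W hW
        obtain ⟨x, -, rfl⟩ := Finset.mem_image.1 hW
        exact hVmem x

/-- The hard direction: Lebesgue number + maximal separated sets. -/
lemma covPn_le_hard [MetricSpace X] [CompactSpace X] [MeasurableSpace X] [BorelSpace X]
    (T : X ≃ₜ X) (f : C(X, ℝ)) {M : ℝ} (hM : ∀ x, |f x| ≤ M)
    {𝒰 : Finset (Set X)} (h𝒰 : IsOpenCover 𝒰) {η : ℝ} (hη : 0 < η) :
    ∃ δ' > 0, ∀ (n : ℕ) (K : Set X), K.Nonempty →
      covPn ⇑T ⇑f 𝒰 n K ≤ Real.exp (n * η) * sepPn ⇑T ⇑f n δ' K := by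
  classical
  obtain ⟨L, hL, hleb⟩ := lebesgue_number_lemma_of_metric_sUnion
    (isCompact_univ : IsCompact (univ : Set X)) (fun U hU => h𝒰.1 U (Finset.mem_coe.1 hU))
    h𝒰.2.symm.subset
  obtain ⟨δ₀, hδ₀, hUC⟩ := Metric.uniformContinuous_iff.1
    (CompactSpace.uniformContinuous_of_continuous f.continuous) η hη
  set δ' : ℝ := min (L/2) (δ₀/2) with hδ'def
  have hδ' : 0 < δ' := lt_min (by linarith) (by linarith)
  have hδ'L : δ' < L := lt_of_le_of_lt (min_le_left _ _) (by linarith)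
  have hδ'f : ∀ a b : X, dist a b ≤ δ' → |f a - f b| ≤ η := by
    intro a b hab
    have h1 : dist a b < δ₀ := lt_of_le_of_lt (hab.trans (min_le_right _ _)) (by linarith)
    have h2 := hUC h1
    rw [Real.dist_eq] at h2
    exact h2.le
  refine ⟨δ', hδ', fun n K hK => ?_⟩
  obtain ⟨N, hN⟩ := sep_card_bound T.continuous n hδ'
  set P : Finset X → Prop := fun E => ↑E ⊆ K ∧
    ∀ x ∈ E, ∀ y ∈ E, x ≠ y → ∃ i < n, δ' < dist (T^[i] x) (T^[i] y) with hPdef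
  have hPempty : P ∅ := ⟨by simp, by simp⟩
  set cards : Set ℕ := {k | ∃ E, P E ∧ E.card = k} with hcards
  have hbdd : BddAbove cards := ⟨N, by rintro k ⟨E, hE, rfl⟩; exact hN E hE.2⟩
  obtain ⟨E, hE, hEcard⟩ := Nat.sSup_mem (⟨0, ∅, hPempty, by simp⟩ : cards.Nonempty) hbdd
  have hmax : ∀ E', P E' → E'.card ≤ E.card := by
    intro E' h'
    rw [hEcard]
    exact le_csSup hbdd ⟨E', h', rfl⟩
  have hcover : ∀ y ∈ K, ∃ x ∈ E, ∀ i < n, dist (T^[i] x) (T^[i] y) ≤ δ' := by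
    intro y hy
    by_contra hcon
    push_neg at hcon
    have hyE : y ∉ E := by
      intro hmem
      obtain ⟨i, hi, hd⟩ := hcon y hmem
      simp at hd
      linarith
    have hPins : P (insert y E) := by
      constructor
      · intro z hz
        rcases Finset.mem_insert.1 (Finset.mem_coe.1 hz) with rfl | hz'
        · exact hy
        · exact hE.1 hz'
      · intro a ha b hb hab
        rcases Finset.mem_insert.1 ha with rfl | ha' <;>
          rcases Finset.mem_insert.1 hb with rfl | hb'
        · exact absurd rfl hab
        · obtain ⟨i, hi, hd⟩ := hcon b hb'
          exact ⟨i, hi, by rwa [dist_comm] at hd⟩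
        · exact hcon a ha'
        · exact hE.2 a ha' b hb' hab
    have hcard := hmax _ hPins
    rw [Finset.card_insert_of_notMem hyE] at hcard
    omega
  set D : X → Set X := fun x =>
    ⋂ i : Fin n, (T^[(i : ℕ)]) ⁻¹' Metric.closedBall (T^[(i : ℕ)] x) δ' with hDdef
  have hDclosed : ∀ x, IsClosed (D x) := fun x =>
    isClosed_iInter fun i => Metric.isClosed_closedBall.preimage (T.continuous.iterate _)
  choose Uof hUof hUofsub using fun z : X => hleb z (Set.mem_univ z)
  set W : (Fin n → {U // U ∈ 𝒰}) → Set X := fun g =>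
    (⋂ i : Fin n, (T^[(i : ℕ)]) ⁻¹' (g i : Set X)) \ ⋃ x ∈ E, D x with hWdef
  set 𝒱 : Finset (Set X) := E.image D ∪ Finset.univ.image W with h𝒱def
  have hWK : ∀ g, W g ∩ K = ∅ := by
    intro g
    apply Set.eq_empty_iff_forall_notMem.2
    rintro y ⟨⟨-, hy2⟩, hyK⟩
    apply hy2
    obtain ⟨x, hx, hxy⟩ := hcover y hyK
    exact Set.mem_biUnion hx (Set.mem_iInter.2 fun i => by
      simpa [Metric.mem_closedBall, dist_comm] using hxy (i : ℕ) i.2)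
  have hmem : (∑ V ∈ 𝒱, sSup ((fun x => Real.exp (birk ⇑T ⇑f n x)) '' (V ∩ K)))
      ∈ covSet ⇑T ⇑f 𝒰 n K := by
    refine ⟨𝒱, ⟨?_, ?_⟩, ?_, rfl⟩
    · intro V hV
      rcases Finset.mem_union.1 hV with hV | hV
      · obtain ⟨x, -, rfl⟩ := Finset.mem_image.1 hV
        exact (hDclosed x).measurableSet
      · obtain ⟨g, -, rfl⟩ := Finset.mem_image.1 hV
        refine MeasurableSet.diff ?_ ?_
        · exact MeasurableSet.iInter fun i =>
            ((h𝒰.1 _ (g i).2).measurableSet).preimage (T.continuous.iterate _).measurable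
        · exact Finset.measurableSet_biUnion E fun x _ => (hDclosed x).measurableSet
    · apply Set.eq_univ_of_univ_subset
      intro z _
      by_cases hz : z ∈ ⋃ x ∈ E, D x
      · obtain ⟨x, hx, hzx⟩ := Set.mem_iUnion₂.1 hz
        exact Set.mem_sUnion.2 ⟨D x,
          Finset.mem_coe.2 (Finset.mem_union_left _ (Finset.mem_image_of_mem D hx)), hzx⟩
      · have hxmem : ∀ i : Fin n, ∃ U ∈ 𝒰, T^[(i : ℕ)] z ∈ U := fun i => by
          have h2 : T^[(i : ℕ)] z ∈ ⋃₀ (𝒰 : Set (Set X)) := h𝒰.2.symm ▸ Set.mem_univ _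
          simpa using h2
        choose U hU hxU using hxmem
        refine Set.mem_sUnion.2 ⟨W fun i => ⟨U i, hU i⟩,
          Finset.mem_coe.2 (Finset.mem_union_right _
            (Finset.mem_image_of_mem _ (Finset.mem_univ _))),
          ⟨Set.mem_iInter.2 fun i => hxU i, hz⟩⟩
    · intro V hV
      rcases Finset.mem_union.1 hV with hV | hV
      · obtain ⟨x, -, rfl⟩ := Finset.mem_image.1 hV
        refine ⟨fun i => Uof (T^[(i : ℕ)] x), fun i => Finset.mem_coe.1 (hUof _), ?_⟩
        exact Set.iInter_mono fun i => Set.preimage_mono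
          ((Metric.closedBall_subset_ball hδ'L).trans (hUofsub _))
      · obtain ⟨g, -, rfl⟩ := Finset.mem_image.1 hV
        exact ⟨fun i => g i, fun i => (g i).2, Set.diff_subset⟩
  refine (covPn_le_of_mem hmem).trans ?_
  have hterm : ∀ x ∈ E, sSup ((fun z => Real.exp (birk ⇑T ⇑f n z)) '' (D x ∩ K))
      ≤ Real.exp (n * η) * Real.exp (birk ⇑T ⇑f n x) := by
    intro x hx
    refine Real.sSup_le ?_ (by positivity)
    rintro r ⟨y, ⟨hyD, -⟩, rfl⟩
    have hsum : birk ⇑T ⇑f n y - birk ⇑T ⇑f n x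
        = ∑ j ∈ Finset.range n, (f (T^[j] y) - f (T^[j] x)) := by
      rw [birk, birk, ← Finset.sum_sub_distrib]
    have habs : |birk ⇑T ⇑f n y - birk ⇑T ⇑f n x| ≤ n * η := by
      rw [hsum]
      calc |∑ j ∈ Finset.range n, (f (T^[j] y) - f (T^[j] x))|
          ≤ ∑ j ∈ Finset.range n, |f (T^[j] y) - f (T^[j] x)| :=
            Finset.abs_sum_le_sum_abs _ _
        _ ≤ ∑ _j ∈ Finset.range n, η := by
            refine Finset.sum_le_sum fun j hj => ?_
            refine hδ'f _ _ ?_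
            have hmem := Set.mem_iInter.1 hyD ⟨j, Finset.mem_range.1 hj⟩
            simpa [Metric.mem_closedBall, dist_comm] using hmem
        _ = n * η := by simp [mul_comm]
    have hb : birk ⇑T ⇑f n y ≤ birk ⇑T ⇑f n x + n * η := by
      have := (abs_le.1 habs).2
      linarith
    calc Real.exp (birk ⇑T ⇑f n y) ≤ Real.exp (birk ⇑T ⇑f n x + n * η) :=
          Real.exp_le_exp.2 hb
      _ = Real.exp (n * η) * Real.exp (birk ⇑T ⇑f n x) := by
          rw [← Real.exp_add]; ring_nf
  calc ∑ V ∈ 𝒱, sSup ((fun x => Real.exp (birk ⇑T ⇑f n x)) '' (V ∩ K))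
      ≤ ∑ V ∈ E.image D, sSup ((fun x => Real.exp (birk ⇑T ⇑f n x)) '' (V ∩ K))
        + ∑ V ∈ Finset.univ.image W,
            sSup ((fun x => Real.exp (birk ⇑T ⇑f n x)) '' (V ∩ K)) := by
        rw [h𝒱def, ← Finset.union_sdiff_self_eq_union, Finset.sum_union Finset.disjoint_sdiff]
        refine add_le_add le_rfl ?_
        exact Finset.sum_le_sum_of_subset_of_nonneg (Finset.sdiff_subset)
          fun V _ _ => sSup_im_nonneg ⇑T ⇑f n _
    _ = ∑ V ∈ E.image D, sSup ((fun x => Real.exp (birk ⇑T ⇑f n x)) '' (V ∩ K)) + 0 := by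
        congr 1
        refine Finset.sum_eq_zero fun V hV => ?_
        obtain ⟨g, -, rfl⟩ := Finset.mem_image.1 hV
        rw [hWK g, Set.image_empty, Real.sSup_empty]
    _ ≤ (∑ x ∈ E, sSup ((fun z => Real.exp (birk ⇑T ⇑f n z)) '' (D x ∩ K))) + 0 := by
        refine add_le_add ?_ le_rfl
        exact sum_image_le' fun V => sSup_im_nonneg ⇑T ⇑f n _
    _ ≤ (∑ x ∈ E, Real.exp (n * η) * Real.exp (birk ⇑T ⇑f n x)) + 0 := by
        refine add_le_add (Finset.sum_le_sum hterm) le_rfl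
    _ = Real.exp (n * η) * ∑ x ∈ E, Real.exp (birk ⇑T ⇑f n x) := by
        rw [add_zero, Finset.mul_sum]
    _ ≤ Real.exp (n * η) * sepPn ⇑T ⇑f n δ' K := by
        refine mul_le_mul_of_nonneg_left ?_ (Real.exp_pos _).le
        exact le_sepPn T.continuous hM n hδ' hE.1 hE.2

/-- For a TDS `(X,T)`, `f ∈ C(X,ℝ)` and a sequence of nonempty
closed subsets `K_n`, `lim_{δ→0} limsup_n (1/n) log P_n(T,f,δ,K_n)` equals
`sup_𝒰 limsup_n (1/n) log P_n(T,f,𝒰,K_n)` over finite open covers `𝒰`. -/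
theorem stmt3 [MetricSpace X] [CompactSpace X] [MeasurableSpace X] [BorelSpace X]
    (T : X ≃ₜ X) (f : C(X, ℝ)) (K : ℕ → Set X)
    (hKne : ∀ n, (K n).Nonempty) (hKcl : ∀ n, IsClosed (K n)) :
    (⨆ (δ : ℝ) (_ : 0 < δ), atTop.limsup fun n : ℕ =>
        ((Real.log (sepPn ⇑T ⇑f n δ (K n)) / n : ℝ) : EReal)) =
      ⨆ (𝒰 : Finset (Set X)) (_ : IsOpenCover 𝒰), atTop.limsup fun n : ℕ =>
        ((Real.log (covPn ⇑T ⇑f 𝒰 n (K n)) / n : ℝ) : EReal) := by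
  classical
  have hne : Nonempty X := ⟨(hKne 0).some⟩
  obtain ⟨M, hM⟩ : ∃ M : ℝ, ∀ x, |f x| ≤ M := by
    obtain ⟨M, hM⟩ := (isCompact_univ : IsCompact (univ : Set X)).exists_bound_of_continuousOn
      f.continuous.continuousOn
    exact ⟨M, fun x => by simpa [Real.norm_eq_abs] using hM x (Set.mem_univ x)⟩
  apply le_antisymm
  · refine iSup₂_le fun δ hδ => ?_
    obtain ⟨𝒰, h𝒰, hle⟩ := sepPn_le_covPn_easy T f hM hδ
    refine le_trans ?_ (le_iSup₂ (f := fun (𝒰 : Finset (Set X)) (_ : IsOpenCover 𝒰) =>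
      atTop.limsup fun n : ℕ => ((Real.log (covPn ⇑T ⇑f 𝒰 n (K n)) / n : ℝ) : EReal)) 𝒰 h𝒰)
    refine limsup_le_limsup (Eventually.of_forall fun n => ?_)
    apply EReal.coe_le_coe_iff.2
    rcases Nat.eq_zero_or_pos n with rfl | hn
    · simp
    · have h1 : 0 < sepPn ⇑T ⇑f n δ (K n) := sepPn_pos T.continuous hM n hδ (hKne n)
      have h2 : Real.log (sepPn ⇑T ⇑f n δ (K n)) ≤ Real.log (covPn ⇑T ⇑f 𝒰 n (K n)) :=
        Real.log_le_log h1 (hle n (K n))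
      rw [div_eq_mul_inv, div_eq_mul_inv]
      exact mul_le_mul_of_nonneg_right h2 (by positivity)
  · refine iSup₂_le fun 𝒰 h𝒰 => ?_
    refine ereal_le_of_forall_pos fun η hη => ?_
    obtain ⟨δ', hδ', hB⟩ := covPn_le_hard T f hM h𝒰 hη
    have hpt : ∀ n : ℕ, ((Real.log (covPn ⇑T ⇑f 𝒰 n (K n)) / n : ℝ) : EReal)
        ≤ ((fun _ : ℕ => (η : EReal)) + fun n : ℕ =>
            ((Real.log (sepPn ⇑T ⇑f n δ' (K n)) / n : ℝ) : EReal)) n := by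
      intro n
      show _ ≤ (η : EReal) + ((Real.log (sepPn ⇑T ⇑f n δ' (K n)) / n : ℝ) : EReal)
      rw [← EReal.coe_add]
      apply EReal.coe_le_coe_iff.2
      rcases Nat.eq_zero_or_pos n with rfl | hn
      · simpa using hη.le
      · have hsp : 0 < sepPn ⇑T ⇑f n δ' (K n) := sepPn_pos T.continuous hM n hδ' (hKne n)
        have hcp : 0 < covPn ⇑T ⇑f 𝒰 n (K n) :=
          lt_of_lt_of_le (Real.exp_pos _) (covPn_pos T.continuous hM h𝒰 n (hKne n))
        have h2 : Real.log (covPn ⇑T ⇑f 𝒰 n (K n))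
            ≤ (n : ℝ) * η + Real.log (sepPn ⇑T ⇑f n δ' (K n)) := by
          have h3 := Real.log_le_log hcp (hB n (K n) (hKne n))
          rwa [Real.log_mul (Real.exp_ne_zero _) hsp.ne', Real.log_exp] at h3
        have hnpos : (0:ℝ) < (n:ℝ) := by exact_mod_cast hn
        calc Real.log (covPn ⇑T ⇑f 𝒰 n (K n)) / n
            ≤ ((n : ℝ) * η + Real.log (sepPn ⇑T ⇑f n δ' (K n))) / n := by
              rw [div_eq_mul_inv, div_eq_mul_inv]
              exact mul_le_mul_of_nonneg_right h2 (by positivity)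
          _ = η + Real.log (sepPn ⇑T ⇑f n δ' (K n)) / n := by
              rw [add_div, mul_div_cancel_left₀ _ hnpos.ne']
    calc atTop.limsup (fun n : ℕ => ((Real.log (covPn ⇑T ⇑f 𝒰 n (K n)) / n : ℝ) : EReal))
        ≤ atTop.limsup ((fun _ : ℕ => (η : EReal)) + fun n : ℕ =>
            ((Real.log (sepPn ⇑T ⇑f n δ' (K n)) / n : ℝ) : EReal)) :=
          limsup_le_limsup (Eventually.of_forall hpt)
      _ ≤ atTop.limsup (fun _ : ℕ => (η : EReal)) + atTop.limsup (fun n : ℕ =>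
            ((Real.log (sepPn ⇑T ⇑f n δ' (K n)) / n : ℝ) : EReal)) := by
          refine EReal.limsup_add_le ?_ ?_
          · left; rw [limsup_const]; exact EReal.coe_ne_bot _
          · left; rw [limsup_const]; exact EReal.coe_ne_top _
      _ ≤ (η : EReal) + ⨆ (δ : ℝ) (_ : 0 < δ), atTop.limsup fun n : ℕ =>
            ((Real.log (sepPn ⇑T ⇑f n δ (K n)) / n : ℝ) : EReal) := by
          rw [limsup_const]
          exact add_le_add le_rfl (le_iSup₂ (f := fun (δ : ℝ) (_ : 0 < δ) =>
            atTop.limsup fun n : ℕ =>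
              ((Real.log (sepPn ⇑T ⇑f n δ (K n)) / n : ℝ) : EReal)) δ' hδ')
end
end

section
/- Let X be a compact metric space, T : X → X a surjective continuous map, let (X̃,T̃) be the inverse limit of (X,T), f ∈ C(X,ℝ), and π₁ : X̃ → X the projection to the first coordinate. Then for any sequence (K_n)_{n≥1} of non-empty closed subsets of X̃, lim_{δ→0} limsup_{n→∞} (1/n) log P_n(T̃,f∘π₁,δ,K_n) = lim_{δ→0} limsup_{n→∞} (1/n) log P_n(T,f,δ,π₁(K_n)). -/
open Filter Set Topology

noncomputable section

variable {X : Type*}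

/-- `P_n(S,g,δ,K)` with respect to an explicit distance function `ρ`:
the supremum of `∑_{z∈E} exp g_n(z)` over subsets `E ⊆ K` that are
`(n,δ)`-separated for `S` with respect to `ρ`. -/
def sepPnD {Y : Type*} (ρ : Y → Y → ℝ) (S : Y → Y) (g : Y → ℝ) (n : ℕ) (δ : ℝ)
    (K : Set Y) : ℝ :=
  sSup { r : ℝ | ∃ E : Finset Y, ↑E ⊆ K ∧
    (∀ x ∈ E, ∀ y ∈ E, x ≠ y → ∃ i < n, δ < ρ (S^[i] x) (S^[i] y)) ∧
    r = ∑ x ∈ E, Real.exp (∑ j ∈ Finset.range n, g (S^[j] x)) }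

/-- The shift homeomorphism `T̃(x₁,x₂,…) = (T x₁, x₁, x₂, …)` on the inverse
limit `X̃ = {(x₁,x₂,…) : T x_{i+1} = x_i}` of `(X,T)` (indexed from `0`). -/
def shiftMap (T : X → X) (x : {p : ℕ → X // ∀ i, T (p (i + 1)) = p i}) :
    {p : ℕ → X // ∀ i, T (p (i + 1)) = p i} :=
  ⟨fun i => match i with
    | 0 => T (x.1 0)
    | k + 1 => x.1 k,
   fun i => match i with
    | 0 => rfl
    | k + 1 => x.2 k⟩

namespace Stmt17

abbrev IL (T : X → X) := {p : ℕ → X // ∀ i, T (p (i + 1)) = p i}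

variable {T : X → X}

lemma shift_zero (x : IL T) : (shiftMap T x).1 0 = T (x.1 0) := rfl
lemma shift_succ (x : IL T) (k : ℕ) : (shiftMap T x).1 (k + 1) = x.1 k := rfl

lemma iter_zero (x : IL T) (i : ℕ) : ((shiftMap T)^[i] x).1 0 = T^[i] (x.1 0) := by
  induction i with
  | zero => rfl
  | succ i ih =>
      rw [Function.iterate_succ_apply', Function.iterate_succ_apply']
      rw [shift_zero, ih]

lemma iter_coord_le (x : IL T) {i k : ℕ} (h : k ≤ i) :
    ((shiftMap T)^[i] x).1 k = T^[i - k] (x.1 0) := by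
  induction i generalizing k with
  | zero =>
      interval_cases k
      simp
  | succ i ih =>
      rw [Function.iterate_succ_apply']
      match k with
      | 0 => simp only [Nat.sub_zero, shift_zero, iter_zero, ← Function.iterate_succ_apply']
      | k + 1 =>
          rw [shift_succ, ih (Nat.succ_le_succ_iff.mp h)]
          have hjk : i + 1 - (k + 1) = i - k := by omega
          rw [hjk]

lemma iter_coord_gt (x : IL T) {i k : ℕ} (h : i < k) :
    ((shiftMap T)^[i] x).1 k = x.1 (k - i) := by
  induction i generalizing k with
  | zero => simp
  | succ i ih =>
      rw [Function.iterate_succ_apply']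
      obtain ⟨j, rfl⟩ : ∃ j, k = j + 1 := ⟨k - 1, by omega⟩
      rw [shift_succ, ih (by omega)]
      have hjk : j + 1 - (i + 1) = j - i := by omega
      rw [hjk]

lemma pow_div_eq (a : ℝ) (c k : ℕ) : a / 2 ^ (k + c + 1) = a / 2 ^ c / 2 / 2 ^ k := by
  rw [div_div, div_div, ← pow_succ', ← pow_add]
  congr 2
  omega

lemma summable_const_div_pow (a : ℝ) (c : ℕ) :
    Summable (fun k : ℕ => a / 2 ^ (k + c + 1)) := by
  have h := summable_geometric_two.mul_left (a / 2 ^ c / 2)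
  refine h.congr fun k => ?_
  rw [pow_div_eq, div_pow, one_pow, mul_one_div]

lemma tsum_const_div_pow (a : ℝ) (c : ℕ) :
    ∑' k : ℕ, a / 2 ^ (k + c + 1) = a / 2 ^ c := by
  rw [← tsum_geometric_two' (a / 2 ^ c)]
  exact tsum_congr fun k => pow_div_eq a c k

section metric
variable [MetricSpace X] [CompactSpace X]

def rho (T : X → X) (x y : IL T) : ℝ := ∑' i : ℕ, dist (x.1 i) (y.1 i) / 2 ^ (i + 1)

lemma dist_bdd : ∃ D : ℝ, 0 ≤ D ∧ ∀ x y : X, dist x y ≤ D := by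
  refine ⟨Metric.diam (univ : Set X), Metric.diam_nonneg, fun x y => ?_⟩
  exact Metric.dist_le_diam_of_mem isCompact_univ.isBounded (mem_univ x) (mem_univ y)

lemma summable_dist (a b : ℕ → X) (c : ℕ) :
    Summable (fun k : ℕ => dist (a k) (b k) / 2 ^ (k + c + 1)) := by
  obtain ⟨D, hD0, hD⟩ := dist_bdd (X := X)
  refine Summable.of_nonneg_of_le (fun k => div_nonneg dist_nonneg (by positivity)) (fun k => ?_)
    (summable_const_div_pow D c)
  gcongr
  exact hD _ _

lemma summable_rho (x y : IL T) :
    Summable (fun k : ℕ => dist (x.1 k) (y.1 k) / 2 ^ (k + 1)) :=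
  summable_dist (fun k => x.1 k) (fun k => y.1 k) 0

lemma rho_nonneg (x y : IL T) : 0 ≤ rho T x y :=
  tsum_nonneg fun k => div_nonneg dist_nonneg (by positivity)

lemma half_dist_le_rho (x y : IL T) : dist (x.1 0) (y.1 0) / 2 ≤ rho T x y := by
  have h := Summable.le_tsum (summable_rho x y) 0
    (fun j _ => div_nonneg dist_nonneg (by positivity))
  simpa [rho] using h

lemma rho_iter_le (x y : IL T) (i : ℕ) (β : ℝ)
    (hβ : ∀ j, j ≤ i → dist (T^[j] (x.1 0)) (T^[j] (y.1 0)) ≤ β) :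
    rho T ((shiftMap T)^[i] x) ((shiftMap T)^[i] y) ≤ β + rho T x y := by
  classical
  have hβ0 : 0 ≤ β := le_trans dist_nonneg (hβ 0 (Nat.zero_le _))
  set g' : ℕ → ℝ :=
    fun k => if k ≤ i then 0 else dist (x.1 (k - i)) (y.1 (k - i)) / 2 ^ (k + 1) with hg'
  obtain ⟨D, hD0, hD⟩ := dist_bdd (X := X)
  have hg'sum : Summable g' := by
    refine Summable.of_nonneg_of_le ?_ ?_ (summable_const_div_pow D 0)
    · intro k
      by_cases h : k ≤ i <;> simp only [hg', h, if_pos, if_neg, if_true, if_false]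
      · exact le_refl 0
      · exact div_nonneg dist_nonneg (by positivity)
    · intro k
      by_cases h : k ≤ i <;> simp only [hg', h, if_pos, if_neg, if_true, if_false]
      · positivity
      · show dist (x.1 (k - i)) (y.1 (k - i)) / 2 ^ (k + 1) ≤ D / 2 ^ (k + 0 + 1)
        gcongr
        exact hD _ _
  have hpt : ∀ k, dist (((shiftMap T)^[i] x).1 k) (((shiftMap T)^[i] y).1 k) / 2 ^ (k + 1)
      ≤ β / 2 ^ (k + 1) + g' k := by
    intro k
    by_cases h : k ≤ i
    · rw [iter_coord_le x h, iter_coord_le y h]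
      simp only [hg', if_pos h, add_zero]
      gcongr
      exact hβ (i - k) (Nat.sub_le _ _)
    · rw [iter_coord_gt x (by omega), iter_coord_gt y (by omega)]
      simp only [hg', if_neg h]
      have h0 : 0 ≤ β / 2 ^ (k + 1) := by positivity
      linarith
  have hsumβ : Summable (fun k : ℕ => β / 2 ^ (k + 1)) := summable_const_div_pow β 0
  have h1 : rho T ((shiftMap T)^[i] x) ((shiftMap T)^[i] y)
      ≤ ∑' k, (β / 2 ^ (k + 1) + g' k) :=
    Summable.tsum_le_tsum hpt (summable_rho _ _) (hsumβ.add hg'sum)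
  rw [Summable.tsum_add hsumβ hg'sum] at h1
  have h2 : ∑' k : ℕ, β / 2 ^ (k + 1) = β := by simpa using tsum_const_div_pow β 0
  have h3 : ∑' k, g' k ≤ rho T x y := by
    have hsplit := (Summable.sum_add_tsum_nat_add (f := g') (i + 1) hg'sum).symm
    have hzero : ∑ k ∈ Finset.range (i + 1), g' k = 0 := by
      refine Finset.sum_eq_zero fun k hk => ?_
      have : k ≤ i := by have := Finset.mem_range.mp hk; omega
      simp [hg', this]
    have hshift : ∀ j : ℕ,
        g' (j + (i + 1)) = dist (x.1 (j + 1)) (y.1 (j + 1)) / 2 ^ (j + (i + 1) + 1) := by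
      intro j
      have hn : ¬ (j + (i + 1) ≤ i) := by omega
      have he : j + (i + 1) - i = j + 1 := by omega
      simp [hg', hn, he]
    have hstep : ∑' j : ℕ, g' (j + (i + 1))
        ≤ ∑' j : ℕ, dist (x.1 (j + 1)) (y.1 (j + 1)) / 2 ^ (j + 1 + 1) := by
      refine Summable.tsum_le_tsum (fun j => ?_) ?_ ?_
      · rw [hshift j]
        apply div_le_div_of_nonneg_left dist_nonneg (by positivity)
        apply pow_le_pow_right₀ (by norm_num)
        omega
      · exact (summable_dist (fun j => x.1 (j + 1)) (fun j => y.1 (j + 1)) (i + 1)).congr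
          (fun j => (hshift j).symm)
      · exact summable_dist (fun j => x.1 (j + 1)) (fun j => y.1 (j + 1)) 1
    have htail : ∑' j : ℕ, dist (x.1 (j + 1)) (y.1 (j + 1)) / 2 ^ (j + 1 + 1) ≤ rho T x y := by
      have hs := Summable.sum_add_tsum_nat_add
        (f := fun k : ℕ => dist (x.1 k) (y.1 k) / 2 ^ (k + 1)) 1 (summable_rho x y)
      have hfirst : 0 ≤ ∑ k ∈ Finset.range 1, dist (x.1 k) (y.1 k) / 2 ^ (k + 1) := by
        refine Finset.sum_nonneg fun k _ => div_nonneg dist_nonneg (by positivity)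
      calc ∑' j : ℕ, dist (x.1 (j + 1)) (y.1 (j + 1)) / 2 ^ (j + 1 + 1)
          ≤ ∑ k ∈ Finset.range 1, dist (x.1 k) (y.1 k) / 2 ^ (k + 1)
            + ∑' j : ℕ, dist (x.1 (j + 1)) (y.1 (j + 1)) / 2 ^ (j + 1 + 1) := by linarith
        _ = rho T x y := hs
    rw [hsplit, hzero, zero_add]
    calc ∑' j : ℕ, g' (j + (i + 1)) ≤ _ := hstep
      _ ≤ rho T x y := htail
  linarith

lemma card_le_of_code {Y ι : Type*} [Fintype ι] (ρ : Y → Y → ℝ) (S : Y → Y) {n : ℕ} {δ : ℝ}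
    (c : Y → ι) (hc : ∀ x y, c x = c y → ρ x y ≤ δ)
    {E : Finset Y} (hE : ∀ x ∈ E, ∀ y ∈ E, x ≠ y → ∃ i < n, δ < ρ (S^[i] x) (S^[i] y)) :
    E.card ≤ Fintype.card ι ^ n := by
  classical
  have hinj : Set.InjOn (fun x (i : Fin n) => c (S^[i.1] x)) ↑E := by
    intro x hx y hy hxy
    by_contra hne
    obtain ⟨i, hi, hsep⟩ := hE x hx y hy hne
    have hci := congrFun hxy ⟨i, hi⟩
    exact absurd (hc _ _ hci) (not_le.mpr hsep)
  calc E.card ≤ (Finset.univ : Finset (Fin n → ι)).card :=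
        Finset.card_le_card_of_injOn _ (fun a _ => Finset.mem_univ _) hinj
    _ = Fintype.card ι ^ n := by simp [Finset.card_univ]

lemma exists_code_X (ε : ℝ) (hε : 0 < ε) :
    ∃ (t : Set X) (_ : Fintype t) (c : X → t), ∀ x y : X, c x = c y → dist x y ≤ ε := by
  obtain ⟨t, htf, htc⟩ :=
    Metric.totallyBounded_iff.mp (isCompact_univ (X := X)).totallyBounded (ε / 2) (by positivity)
  haveI : Fintype t := htf.fintype
  have hc : ∀ x : X, ∃ y : t, dist x (y : X) < ε / 2 := by
    intro x
    have hx := htc (mem_univ x)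
    simp only [mem_iUnion] at hx
    obtain ⟨y, hy, hxy⟩ := hx
    exact ⟨⟨y, hy⟩, by simpa [Metric.mem_ball] using hxy⟩
  refine ⟨t, inferInstance, fun x => (hc x).choose, fun x y h => ?_⟩
  have h1 := (hc x).choose_spec
  have h2 := (hc y).choose_spec
  have h' : (hc x).choose = (hc y).choose := h
  rw [h'] at h1
  calc dist x y ≤ dist x ((hc y).choose : X) + dist ((hc y).choose : X) y :=
        dist_triangle _ _ _
    _ ≤ ε / 2 + ε / 2 := by
        rw [dist_comm ((hc y).choose : X) y]
        exact add_le_add h1.le h2.le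
    _ = ε := by ring

lemma exists_sep_bound_X (δ : ℝ) (hδ : 0 < δ) :
    ∃ N : ℕ, ∀ (S : X → X) (n : ℕ) (E : Finset X),
      (∀ x ∈ E, ∀ y ∈ E, x ≠ y → ∃ i < n, δ < dist (S^[i] x) (S^[i] y)) →
      E.card ≤ N ^ n := by
  obtain ⟨t, ft, c, hc⟩ := exists_code_X (X := X) δ hδ
  haveI := ft
  exact ⟨Fintype.card t, fun S n E hE => card_le_of_code dist S c hc hE⟩

lemma exists_sep_bound_IL (T : X → X) (δ : ℝ) (hδ : 0 < δ) :
    ∃ N : ℕ, ∀ (S : IL T → IL T) (n : ℕ) (E : Finset (IL T)),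
      (∀ x ∈ E, ∀ y ∈ E, x ≠ y → ∃ i < n, δ < rho T (S^[i] x) (S^[i] y)) →
      E.card ≤ N ^ n := by
  obtain ⟨D, hD0, hD⟩ := dist_bdd (X := X)
  obtain ⟨m, hm⟩ := pow_unbounded_of_one_lt (R := ℝ) (D / (δ / 2)) one_lt_two
  have hm2 : D / 2 ^ m < δ / 2 := by
    rw [div_lt_iff₀ (by positivity)] at hm ⊢
    linarith
  obtain ⟨t, ft, c, hc⟩ := exists_code_X (X := X) (δ / 4) (by positivity)
  haveI := ft
  refine ⟨Fintype.card (Fin m → t), fun S n E hE => ?_⟩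
  refine card_le_of_code (rho T) S (fun x => fun k : Fin m => c (x.1 k.1)) ?_ hE
  intro x y h
  have hsplit := (Summable.sum_add_tsum_nat_add
    (f := fun k : ℕ => dist (x.1 k) (y.1 k) / 2 ^ (k + 1)) m (summable_rho x y)).symm
  have hhead : ∑ k ∈ Finset.range m, dist (x.1 k) (y.1 k) / 2 ^ (k + 1) ≤ δ / 4 := by
    calc ∑ k ∈ Finset.range m, dist (x.1 k) (y.1 k) / 2 ^ (k + 1)
        ≤ ∑ k ∈ Finset.range m, δ / 4 / 2 ^ (k + 1) := by
          refine Finset.sum_le_sum fun k hk => ?_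
          have hck := congrFun h ⟨k, Finset.mem_range.mp hk⟩
          gcongr
          exact hc _ _ hck
      _ ≤ ∑' k : ℕ, δ / 4 / 2 ^ (k + 1) :=
          Summable.sum_le_tsum _ (fun k _ => by positivity) (summable_const_div_pow (δ / 4) 0)
      _ = δ / 4 := by simpa using tsum_const_div_pow (δ / 4) 0
  have htail : ∑' j : ℕ, dist (x.1 (j + m)) (y.1 (j + m)) / 2 ^ (j + m + 1) ≤ D / 2 ^ m := by
    calc ∑' j : ℕ, dist (x.1 (j + m)) (y.1 (j + m)) / 2 ^ (j + m + 1)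
        ≤ ∑' j : ℕ, D / 2 ^ (j + m + 1) := by
          refine Summable.tsum_le_tsum (fun j => ?_)
            (summable_dist (fun j => x.1 (j + m)) (fun j => y.1 (j + m)) m)
            (summable_const_div_pow D m)
          gcongr
          exact hD _ _
      _ = D / 2 ^ m := tsum_const_div_pow D m
  show rho T x y ≤ δ
  rw [rho, hsplit]
  linarith

end metric

section sep

variable {Y : Type*} (ρ : Y → Y → ℝ) (S : Y → Y) (g : Y → ℝ) (n : ℕ) (δ : ℝ) (K : Set Y)

def sepSet : Set ℝ :=
  { r : ℝ | ∃ E : Finset Y, ↑E ⊆ K ∧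
    (∀ x ∈ E, ∀ y ∈ E, x ≠ y → ∃ i < n, δ < ρ (S^[i] x) (S^[i] y)) ∧
    r = ∑ x ∈ E, Real.exp (∑ j ∈ Finset.range n, g (S^[j] x)) }

lemma sepPnD_eq : sepPnD ρ S g n δ K = sSup (sepSet ρ S g n δ K) := rfl

lemma zero_mem_sepSet : (0 : ℝ) ∈ sepSet ρ S g n δ K :=
  ⟨∅, by simp, by simp, by simp⟩

lemma single_mem_sepSet {z : Y} (hz : z ∈ K) :
    Real.exp (∑ j ∈ Finset.range n, g (S^[j] z)) ∈ sepSet ρ S g n δ K :=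
  ⟨{z}, by simpa using hz,
   fun x hx y hy hxy =>
     absurd (by rw [Finset.mem_singleton.mp hx, Finset.mem_singleton.mp hy]) hxy,
   (Finset.sum_singleton _ _).symm⟩

lemma bddAbove_sepSet (N : ℕ)
    (hN : ∀ E : Finset Y,
      (∀ x ∈ E, ∀ y ∈ E, x ≠ y → ∃ i < n, δ < ρ (S^[i] x) (S^[i] y)) → E.card ≤ N)
    (M : ℝ) (hM : ∀ y, g y ≤ M) : BddAbove (sepSet ρ S g n δ K) := by
  refine ⟨N * Real.exp (n * M), fun r hr => ?_⟩
  obtain ⟨E, hEK, hsep, rfl⟩ := hr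
  calc ∑ x ∈ E, Real.exp (∑ j ∈ Finset.range n, g (S^[j] x))
      ≤ ∑ _x ∈ E, Real.exp (n * M) := by
        refine Finset.sum_le_sum fun x _ => Real.exp_le_exp.mpr ?_
        calc ∑ j ∈ Finset.range n, g (S^[j] x) ≤ ∑ _j ∈ Finset.range n, M :=
              Finset.sum_le_sum fun j _ => hM _
          _ = n * M := by simp [Finset.sum_const, nsmul_eq_mul]
    _ = E.card * Real.exp (n * M) := by rw [Finset.sum_const, nsmul_eq_mul]
    _ ≤ N * Real.exp (n * M) := by
        have hc : (E.card : ℝ) ≤ N := by exact_mod_cast hN E hsep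
        exact mul_le_mul_of_nonneg_right hc (Real.exp_pos _).le

lemma sepPnD_nonneg (h : BddAbove (sepSet ρ S g n δ K)) : 0 ≤ sepPnD ρ S g n δ K :=
  le_csSup h (zero_mem_sepSet ρ S g n δ K)

lemma sepPnD_pos (hK : K.Nonempty) (h : BddAbove (sepSet ρ S g n δ K)) :
    0 < sepPnD ρ S g n δ K := by
  obtain ⟨z, hz⟩ := hK
  exact lt_of_lt_of_le (Real.exp_pos _) (le_csSup h (single_mem_sepSet ρ S g n δ K hz))

end sep

section metric2
variable [MetricSpace X] [CompactSpace X] {T : X → X}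

lemma extract (f : C(X, ℝ)) (n : ℕ) (δ γ : ℝ) (hγ : 0 < γ) (hγδ : 4 * γ ≤ δ) (N : ℕ)
    (hN : ∀ B : Finset (IL T),
      (∀ x ∈ B, ∀ y ∈ B, x ≠ y → δ / 2 < rho T x y) → B.card ≤ N) :
    ∀ E : Finset (IL T),
      (∀ x ∈ E, ∀ y ∈ E, x ≠ y →
        ∃ i < n, δ < rho T ((shiftMap T)^[i] x) ((shiftMap T)^[i] y)) →
      ∃ E' : Finset (IL T), E' ⊆ E ∧
        (∀ x ∈ E', ∀ y ∈ E', x ≠ y →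
          ∃ i < n, γ < dist (T^[i] (x.1 0)) (T^[i] (y.1 0))) ∧
        ∑ x ∈ E, Real.exp (∑ j ∈ Finset.range n, f (T^[j] (x.1 0)))
          ≤ N * ∑ x ∈ E', Real.exp (∑ j ∈ Finset.range n, f (T^[j] (x.1 0))) := by
  classical
  set w : IL T → ℝ := fun x => Real.exp (∑ j ∈ Finset.range n, f (T^[j] (x.1 0))) with hw
  intro E
  induction E using Finset.strongInduction with
  | _ E ih =>
    intro hE
    rcases E.eq_empty_or_nonempty with rfl | hne
    · exact ⟨∅, Finset.Subset.refl _, by simp, by simp⟩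
    obtain ⟨e, heE, hemax⟩ := E.exists_max_image w hne
    set B : Finset (IL T) :=
      E.filter (fun z => ¬ ∃ i < n, γ < dist (T^[i] (z.1 0)) (T^[i] (e.1 0))) with hB
    have heB : e ∈ B := by
      simp only [hB, Finset.mem_filter]
      refine ⟨heE, ?_⟩
      push_neg
      intro i hi
      simpa using hγ.le
    have hBsub : B ⊆ E := Finset.filter_subset _ _
    have hBsep : ∀ x ∈ B, ∀ y ∈ B, x ≠ y → δ / 2 < rho T x y := by
      intro x hx y hy hxy
      have hx' := Finset.mem_filter.mp hx
      have hy' := Finset.mem_filter.mp hy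
      have hx2 : ∀ i < n, dist (T^[i] (x.1 0)) (T^[i] (e.1 0)) ≤ γ := by
        have h2 := hx'.2; push_neg at h2; exact h2
      have hy2 : ∀ i < n, dist (T^[i] (y.1 0)) (T^[i] (e.1 0)) ≤ γ := by
        have h2 := hy'.2; push_neg at h2; exact h2
      obtain ⟨i, hi, hsep⟩ := hE x hx'.1 y hy'.1 hxy
      have hβ : ∀ j, j ≤ i → dist (T^[j] (x.1 0)) (T^[j] (y.1 0)) ≤ 2 * γ := by
        intro j hj
        have hjn : j < n := lt_of_le_of_lt hj hi
        calc dist (T^[j] (x.1 0)) (T^[j] (y.1 0))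
            ≤ dist (T^[j] (x.1 0)) (T^[j] (e.1 0))
              + dist (T^[j] (e.1 0)) (T^[j] (y.1 0)) := dist_triangle _ _ _
          _ ≤ γ + γ := add_le_add (hx2 j hjn) (by rw [dist_comm]; exact hy2 j hjn)
          _ = 2 * γ := by ring
      have hkey := rho_iter_le x y i (2 * γ) hβ
      linarith
    have hBcard : B.card ≤ N := hN B hBsep
    have hBsum : ∑ x ∈ B, w x ≤ N * w e := by
      calc ∑ x ∈ B, w x ≤ ∑ _x ∈ B, w e :=
            Finset.sum_le_sum fun x hx => hemax x (hBsub hx)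
        _ = B.card * w e := by rw [Finset.sum_const, nsmul_eq_mul]
        _ ≤ N * w e := by
            have hc : (B.card : ℝ) ≤ N := by exact_mod_cast hBcard
            exact mul_le_mul_of_nonneg_right hc (Real.exp_pos _).le
    obtain ⟨E'', hE''sub, hE''sep, hE''sum⟩ :=
      ih (E \ B) (Finset.sdiff_ssubset hBsub ⟨e, heB⟩)
        (fun x hx y hy hxy =>
          hE x (Finset.mem_sdiff.mp hx).1 y (Finset.mem_sdiff.mp hy).1 hxy)
    have heE'' : e ∉ E'' := fun h => (Finset.mem_sdiff.mp (hE''sub h)).2 heB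
    have hyNB : ∀ y ∈ E'', y ≠ e → ∃ i < n, γ < dist (T^[i] (y.1 0)) (T^[i] (e.1 0)) := by
      intro y hy _
      have hyB : y ∉ B := (Finset.mem_sdiff.mp (hE''sub hy)).2
      have hyE : y ∈ E := (Finset.mem_sdiff.mp (hE''sub hy)).1
      by_contra hcon
      exact hyB (Finset.mem_filter.mpr ⟨hyE, hcon⟩)
    refine ⟨insert e E'', ?_, ?_, ?_⟩
    · intro z hz
      rcases Finset.mem_insert.mp hz with rfl | hz'
      · exact heE
      · exact (Finset.mem_sdiff.mp (hE''sub hz')).1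
    · intro x hx y hy hxy
      rcases Finset.mem_insert.mp hx with rfl | hx' <;>
        rcases Finset.mem_insert.mp hy with rfl | hy'
      · exact absurd rfl hxy
      · obtain ⟨i, hi, hd⟩ := hyNB y hy' (fun h => hxy h.symm)
        exact ⟨i, hi, by rwa [dist_comm]⟩
      · exact hyNB x hx' hxy
      · exact hE''sep x hx' y hy' hxy
    · rw [Finset.sum_insert heE'']
      calc ∑ x ∈ E, w x = ∑ x ∈ E \ B, w x + ∑ x ∈ B, w x := (Finset.sum_sdiff hBsub).symm
        _ ≤ N * ∑ x ∈ E'', w x + N * w e := add_le_add hE''sum hBsum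
        _ = N * (w e + ∑ x ∈ E'', w x) := by ring

lemma birkhoff_eq (f : C(X, ℝ)) (n : ℕ) (x : IL T) :
    ∑ j ∈ Finset.range n, f (((shiftMap T)^[j] x).1 0)
      = ∑ j ∈ Finset.range n, f (T^[j] (x.1 0)) :=
  Finset.sum_congr rfl fun j _ => by rw [iter_zero]

lemma core_easy (f : C(X, ℝ)) {K : Set (IL T)} (hK : K.Nonempty) (n : ℕ) (δ : ℝ)
    (hbdd : BddAbove (sepSet (rho T) (shiftMap T) (fun x => f (x.1 0)) n (δ / 2) K)) :
    sepPnD dist T ⇑f n δ ((fun x : IL T => x.1 0) '' K)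
      ≤ sepPnD (rho T) (shiftMap T) (fun x => f (x.1 0)) n (δ / 2) K := by
  classical
  rw [sepPnD_eq, sepPnD_eq]
  refine Real.sSup_le (fun r hr => ?_) (le_csSup hbdd (zero_mem_sepSet _ _ _ _ _ _))
  obtain ⟨E, hEK, hsep, rfl⟩ := hr
  obtain ⟨z₀, hz₀⟩ := hK
  set L : X → IL T := fun x => if h : ∃ z ∈ K, z.1 0 = x then h.choose else z₀ with hL
  have hLspec : ∀ x ∈ E, L x ∈ K ∧ (L x).1 0 = x := by
    intro x hx
    obtain ⟨z, hz, hzx⟩ := hEK hx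
    have hex : ∃ z ∈ K, z.1 0 = x := ⟨z, hz, hzx⟩
    simp only [hL, dif_pos hex]
    exact ⟨hex.choose_spec.1, hex.choose_spec.2⟩
  apply le_csSup hbdd
  have hinj : ∀ x ∈ E, ∀ y ∈ E, L x = L y → x = y := by
    intro x hx y hy hLxy
    rw [← (hLspec x hx).2, ← (hLspec y hy).2, hLxy]
  refine ⟨E.image L, ?_, ?_, ?_⟩
  · intro z hz
    simp only [Finset.coe_image, Set.mem_image, Finset.mem_coe] at hz
    obtain ⟨x, hx, rfl⟩ := hz
    exact (hLspec x hx).1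
  · intro a ha b hb hab
    simp only [Finset.mem_image] at ha hb
    obtain ⟨x, hx, rfl⟩ := ha
    obtain ⟨y, hy, rfl⟩ := hb
    have hxy : x ≠ y := fun h => hab (by rw [h])
    obtain ⟨i, hi, hd⟩ := hsep x hx y hy hxy
    refine ⟨i, hi, ?_⟩
    have hle := half_dist_le_rho ((shiftMap T)^[i] (L x)) ((shiftMap T)^[i] (L y))
    rw [iter_zero, iter_zero, (hLspec x hx).2, (hLspec y hy).2] at hle
    linarith
  · rw [Finset.sum_image hinj]
    refine Finset.sum_congr rfl fun x hx => ?_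
    congr 1
    rw [birkhoff_eq, (hLspec x hx).2]

lemma core_hard (f : C(X, ℝ)) {K : Set (IL T)} (n : ℕ) (δ : ℝ) (hδ : 0 < δ) (N : ℕ)
    (hN : ∀ B : Finset (IL T),
      (∀ x ∈ B, ∀ y ∈ B, x ≠ y → δ / 2 < rho T x y) → B.card ≤ N)
    (hbddX : BddAbove (sepSet dist T ⇑f n (δ / 4) ((fun x : IL T => x.1 0) '' K))) :
    sepPnD (rho T) (shiftMap T) (fun x => f (x.1 0)) n δ K
      ≤ N * sepPnD dist T ⇑f n (δ / 4) ((fun x : IL T => x.1 0) '' K) := by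
  classical
  rw [sepPnD_eq, sepPnD_eq]
  have hX0 : 0 ≤ sSup (sepSet dist T ⇑f n (δ / 4) ((fun x : IL T => x.1 0) '' K)) :=
    le_csSup hbddX (zero_mem_sepSet _ _ _ _ _ _)
  refine Real.sSup_le (fun r hr => ?_) (mul_nonneg (Nat.cast_nonneg N) hX0)
  obtain ⟨E, hEK, hsep, rfl⟩ := hr
  obtain ⟨E', hE'sub, hE'sep, hE'sum⟩ :=
    extract f n δ (δ / 4) (by positivity) (by linarith) N hN E hsep
  have hinj : ∀ x ∈ E', ∀ y ∈ E', x.1 0 = y.1 0 → x = y := by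
    intro x hx y hy hxy
    by_contra hne
    obtain ⟨i, hi, hd⟩ := hE'sep x hx y hy hne
    rw [hxy, dist_self] at hd
    linarith
  set P := E'.image (fun z : IL T => z.1 0) with hP
  have hPmem : (∑ x ∈ P, Real.exp (∑ j ∈ Finset.range n, f (T^[j] x)))
      ∈ sepSet dist T ⇑f n (δ / 4) ((fun x : IL T => x.1 0) '' K) := by
    refine ⟨P, ?_, ?_, rfl⟩
    · intro a ha
      simp only [hP, Finset.coe_image, Set.mem_image, Finset.mem_coe] at ha
      obtain ⟨z, hz, rfl⟩ := ha
      exact ⟨z, hEK (hE'sub hz), rfl⟩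
    · intro a ha b hb hab
      simp only [hP, Finset.mem_image] at ha hb
      obtain ⟨x, hx, rfl⟩ := ha
      obtain ⟨y, hy, rfl⟩ := hb
      exact hE'sep x hx y hy (fun h => hab (by rw [h]))
  have hPsum : ∑ x ∈ P, Real.exp (∑ j ∈ Finset.range n, f (T^[j] x))
      = ∑ x ∈ E', Real.exp (∑ j ∈ Finset.range n, f (T^[j] (x.1 0))) :=
    Finset.sum_image hinj
  have hr' : ∑ x ∈ E, Real.exp (∑ j ∈ Finset.range n, f (((shiftMap T)^[j] x).1 0))
      = ∑ x ∈ E, Real.exp (∑ j ∈ Finset.range n, f (T^[j] (x.1 0))) :=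
    Finset.sum_congr rfl fun x _ => by rw [birkhoff_eq]
  calc ∑ x ∈ E, Real.exp (∑ j ∈ Finset.range n, f (((shiftMap T)^[j] x).1 0))
      = ∑ x ∈ E, Real.exp (∑ j ∈ Finset.range n, f (T^[j] (x.1 0))) := hr'
    _ ≤ N * ∑ x ∈ E', Real.exp (∑ j ∈ Finset.range n, f (T^[j] (x.1 0))) := hE'sum
    _ = N * ∑ x ∈ P, Real.exp (∑ j ∈ Finset.range n, f (T^[j] x)) := by rw [hPsum]
    _ ≤ N * sSup (sepSet dist T ⇑f n (δ / 4) ((fun x : IL T => x.1 0) '' K)) :=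
        mul_le_mul_of_nonneg_left (le_csSup hbddX hPmem) (Nat.cast_nonneg N)

end metric2

end Stmt17

open Stmt17

/-- Let `(X̃,T̃)` be the inverse limit of a surjective
continuous `T` on a compact metric space `X`, with metric
`d_T(x̃,ỹ) = ∑_i d(x_i,y_i)/2^i`, and let `π₁` be the projection to the first
coordinate. For any sequence of nonempty closed `K_n ⊆ X̃`,
`lim_{δ→0} limsup_n (1/n) log P_n(T̃, f∘π₁, δ, K_n)
  = lim_{δ→0} limsup_n (1/n) log P_n(T, f, δ, π₁(K_n))`
(the expressions being nonincreasing in `δ`, the limits are suprema over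
`δ > 0`). -/
theorem stmt17 [MetricSpace X] [CompactSpace X]
    (T : X → X) (hT : Continuous T) (hTs : Function.Surjective T) (f : C(X, ℝ))
    (K : ℕ → Set {p : ℕ → X // ∀ i, T (p (i + 1)) = p i})
    (hKne : ∀ n, (K n).Nonempty) (hKcl : ∀ n, IsClosed (K n)) :
    (⨆ (δ : ℝ) (_ : 0 < δ), atTop.limsup fun n : ℕ =>
        ((Real.log (sepPnD
            (fun x y => ∑' i : ℕ, dist (x.1 i) (y.1 i) / 2 ^ (i + 1))
            (shiftMap T) (fun x => f (x.1 0)) n δ (K n)) / n : ℝ) : EReal)) =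
      ⨆ (δ : ℝ) (_ : 0 < δ), atTop.limsup fun n : ℕ =>
        ((Real.log (sepPnD dist T (⇑f) n δ
            ((fun x : {p : ℕ → X // ∀ i, T (p (i + 1)) = p i} => x.1 0) '' K n))
          / n : ℝ) : EReal) := by

  classical
  have hρ : (fun x y : IL T => ∑' i : ℕ, dist (x.1 i) (y.1 i) / 2 ^ (i + 1)) = rho T := rfl
  rw [hρ]
  obtain ⟨M, hM⟩ : ∃ M, ∀ x : X, f x ≤ M :=
    ⟨‖f‖, fun x => le_trans (le_abs_self _) (f.norm_coe_le_norm x)⟩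
  have hdivmono : ∀ (n : ℕ) (a b : ℝ), a ≤ b → a / (n : ℝ) ≤ b / n := by
    intro n a b h
    rcases Nat.eq_zero_or_pos n with rfl | hn
    · simp
    · have hn' : (0:ℝ) < n := by exact_mod_cast hn
      gcongr
  apply le_antisymm
  · -- hard direction
    refine iSup₂_le fun δ hδ => ?_
    obtain ⟨N₀, hN₀⟩ := exists_sep_bound_IL T (δ / 2) (by positivity)
    have hNstat : ∀ B : Finset (IL T),
        (∀ x ∈ B, ∀ y ∈ B, x ≠ y → δ / 2 < rho T x y) → B.card ≤ N₀ := by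
      intro B hB
      have h1 := hN₀ id 1 B (fun x hx y hy hxy =>
        ⟨0, by norm_num, by simpa using hB x hx y hy hxy⟩)
      simpa using h1
    obtain ⟨N₁, hN₁⟩ := exists_sep_bound_X (X := X) (δ / 4) (by positivity)
    obtain ⟨N₂, hN₂⟩ := exists_sep_bound_IL T δ hδ
    have hbddX : ∀ n : ℕ, BddAbove (sepSet dist T ⇑f n (δ / 4)
        ((fun x : IL T => x.1 0) '' K n)) := fun n =>
      bddAbove_sepSet _ _ _ _ _ _ (N₁ ^ n) (fun E hE => hN₁ T n E hE) M hM
    have hbddIL : ∀ n : ℕ, BddAbove (sepSet (rho T) (shiftMap T)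
        (fun x : IL T => f (x.1 0)) n δ (K n)) := fun n =>
      bddAbove_sepSet _ _ _ _ _ _ (N₂ ^ n) (fun E hE => hN₂ (shiftMap T) n E hE)
        M (fun z => hM _)
    have hN₀pos : 0 < N₀ := by
      have h0 := hNstat {(hKne 0).some} (by
        intro x hx y hy hxy
        rw [Finset.mem_singleton.mp hx, Finset.mem_singleton.mp hy] at hxy
        exact absurd rfl hxy)
      exact (by simpa using h0 : 1 ≤ N₀)
    have hseq : ∀ n : ℕ, sepPnD (rho T) (shiftMap T) (fun x : IL T => f (x.1 0)) n δ (K n)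
        ≤ N₀ * sepPnD dist T ⇑f n (δ / 4) ((fun x : IL T => x.1 0) '' K n) := fun n =>
      core_hard f n δ hδ N₀ hNstat (hbddX n)
    have hposIL : ∀ n : ℕ,
        0 < sepPnD (rho T) (shiftMap T) (fun x : IL T => f (x.1 0)) n δ (K n) := fun n =>
      sepPnD_pos _ _ _ _ _ _ (hKne n) (hbddIL n)
    have hposX : ∀ n : ℕ,
        0 < sepPnD dist T ⇑f n (δ / 4) ((fun x : IL T => x.1 0) '' K n) := fun n =>
      sepPnD_pos _ _ _ _ _ _ ((hKne n).image _) (hbddX n)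
    have hlog : ∀ n : ℕ,
        Real.log (sepPnD (rho T) (shiftMap T) (fun x : IL T => f (x.1 0)) n δ (K n)) / n
        ≤ Real.log N₀ / n
          + Real.log (sepPnD dist T ⇑f n (δ / 4) ((fun x : IL T => x.1 0) '' K n)) / n := by
      intro n
      rw [← add_div]
      refine hdivmono n _ _ ?_
      have h1 := Real.log_le_log (hposIL n) (hseq n)
      rwa [Real.log_mul (by exact_mod_cast hN₀pos.ne') (hposX n).ne'] at h1
    set u : ℕ → EReal := fun n =>
      ((Real.log (sepPnD (rho T) (shiftMap T) (fun x : IL T => f (x.1 0)) n δ (K n)) / n : ℝ)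
        : EReal) with hu
    set v : ℕ → EReal := fun n =>
      ((Real.log (sepPnD dist T ⇑f n (δ / 4) ((fun x : IL T => x.1 0) '' K n)) / n : ℝ)
        : EReal) with hv
    set a : ℕ → EReal := fun n => ((Real.log N₀ / n : ℝ) : EReal) with ha
    have h1 : atTop.limsup u ≤ atTop.limsup (a + v) := by
      refine limsup_le_limsup (Eventually.of_forall fun n => ?_)
      show u n ≤ a n + v n
      rw [hu, hv, ha, ← EReal.coe_add]
      exact EReal.coe_le_coe_iff.mpr (hlog n)
    have haT : Tendsto a atTop (nhds (0 : EReal)) := by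
      have h2 : Tendsto (fun n : ℕ => Real.log N₀ / n) atTop (nhds 0) :=
        tendsto_const_div_atTop_nhds_zero_nat _
      have h3 := (continuous_coe_real_ereal.tendsto 0).comp h2
      exact h3
    have ha0 : atTop.limsup a = 0 := haT.limsup_eq
    have h2 : atTop.limsup (a + v) ≤ atTop.limsup a + atTop.limsup v :=
      EReal.limsup_add_le (Or.inl (by rw [ha0]; exact EReal.zero_ne_bot))
        (Or.inl (by rw [ha0]; exact EReal.zero_ne_top))
    rw [ha0, zero_add] at h2
    refine le_trans (h1.trans h2) ?_
    exact le_iSup_of_le (δ / 4) (le_iSup_of_le (by positivity) le_rfl)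
  · -- easy direction
    refine iSup₂_le fun δ hδ => ?_
    obtain ⟨N₂, hN₂⟩ := exists_sep_bound_IL T (δ / 2) (by positivity)
    obtain ⟨N₁, hN₁⟩ := exists_sep_bound_X (X := X) δ hδ
    have hbddIL : ∀ n : ℕ, BddAbove (sepSet (rho T) (shiftMap T)
        (fun x : IL T => f (x.1 0)) n (δ / 2) (K n)) := fun n =>
      bddAbove_sepSet _ _ _ _ _ _ (N₂ ^ n) (fun E hE => hN₂ (shiftMap T) n E hE)
        M (fun z => hM _)
    have hbddX : ∀ n : ℕ, BddAbove (sepSet dist T ⇑f n δ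
        ((fun x : IL T => x.1 0) '' K n)) := fun n =>
      bddAbove_sepSet _ _ _ _ _ _ (N₁ ^ n) (fun E hE => hN₁ T n E hE) M hM
    have hposX : ∀ n : ℕ,
        0 < sepPnD dist T ⇑f n δ ((fun x : IL T => x.1 0) '' K n) := fun n =>
      sepPnD_pos _ _ _ _ _ _ ((hKne n).image _) (hbddX n)
    have hseq : ∀ n : ℕ, sepPnD dist T ⇑f n δ ((fun x : IL T => x.1 0) '' K n)
        ≤ sepPnD (rho T) (shiftMap T) (fun x : IL T => f (x.1 0)) n (δ / 2) (K n) := fun n =>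
      core_easy f (hKne n) n δ (hbddIL n)
    have hlog : ∀ n : ℕ,
        Real.log (sepPnD dist T ⇑f n δ ((fun x : IL T => x.1 0) '' K n)) / n
        ≤ Real.log (sepPnD (rho T) (shiftMap T)
            (fun x : IL T => f (x.1 0)) n (δ / 2) (K n)) / n :=
      fun n => hdivmono n _ _ (Real.log_le_log (hposX n) (hseq n))
    have h1 : (atTop.limsup fun n : ℕ =>
        ((Real.log (sepPnD dist T ⇑f n δ ((fun x : IL T => x.1 0) '' K n)) / n : ℝ) : EReal))
        ≤ atTop.limsup fun n : ℕ =>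
        ((Real.log (sepPnD (rho T) (shiftMap T)
            (fun x : IL T => f (x.1 0)) n (δ / 2) (K n)) / n : ℝ) : EReal) :=
      limsup_le_limsup (Eventually.of_forall fun n => EReal.coe_le_coe_iff.mpr (hlog n))
    refine le_trans h1 ?_
    exact le_iSup_of_le (δ / 2) (le_iSup_of_le (by positivity) le_rfl)
end
end
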